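/- The five-point subset of the vertices of the unit cube M = {(0,0,0), (0,1,0), (1,0,0), (0,0,1), (1,1,1)} ⊆ ℝ³ is not basic. -/

import Mathlib

/-- A set `M ⊆ ℝ³` is *basic* if every real-valued function on `M` decomposes as a sum of
functions of the three separate coordinates. -/
def IsBasic (M : Set (Fin 3 → ℝ)) : Prop :=
  ∀ f : (Fin 3 → ℝ) → ℝ, ∃ f₁ f₂ f₃ : ℝ → ℝ,
    ∀ p ∈ M, f p = f₁ (p 0) + f₂ (p 1) + f₃ (p 2)

/-- The five-point subset `{(0,0,0), (0,1,0), (1,0,0), (0,0,1), (1,1,1)}` of the vertices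
of the unit cube is not basic. -/
theorem five_cube_vertices_not_basic :
    ¬ IsBasic {![0, 0, 0], ![0, 1, 0], ![1, 0, 0], ![0, 0, 1], ![1, 1, 1]} := by
  intro h
  obtain ⟨f₁, f₂, f₃, hf⟩ := h (fun p => if p 0 = 0 ∧ p 1 = 0 ∧ p 2 = 0 then 1 else 0)
  have hA := hf ![0, 0, 0] (by simp)
  have hB := hf ![0, 1, 0] (by simp)
  have hC := hf ![1, 0, 0] (by simp)
  have hD := hf ![0, 0, 1] (by simp)
  have hE := hf ![1, 1, 1] (by simp)
  norm_num [Matrix.cons_val_zero, Matrix.cons_val_one, Matrix.head_cons, Matrix.cons_val_two, Matrix.tail_cons] at hA hB hC hD hE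
  linarith
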